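/- As L and j tend to infinity, the killing probability q_L(j,†) := 1 - q_L(j,j+1) - ∑_{m=0}^{j-1} q_L(j,j-m) = L·Z(L+j+1)/Z'(L,j) of the peeling process satisfies q_L(j,†) ~ (√(3π)/4)·√(L/j)·(L+j)^{-3/2}, using Z(L+j+1) ~ (√3/(8√π))·12^{L+j}(L+j)^{-5/2} and Z'(L,j) ~ (3^{L+j}·4^L/(2(L+j)))·√(L/π)·j·binom(2j,j). -/

import Mathlib

open Filter Real

noncomputable def cb (m : ℕ) : ℝ :=
  (Nat.centralBinom m : ℝ) * Real.sqrt (Real.pi * m) / 4 ^ m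

noncomputable def phi (k : ℕ) : ℝ :=
  ((k:ℝ)+1) * Real.sqrt ((k:ℝ)+1) / (Real.sqrt k * ((k:ℝ)+2))

lemma cb_eq_stirling (n : ℕ) (hn : 1 ≤ n) :
    cb n = Real.sqrt Real.pi * Stirling.stirlingSeq (2 * n) / Stirling.stirlingSeq n ^ 2 := by
  have hn0 : (0:ℝ) < n := by exact_mod_cast hn
  have h0 := Nat.choose_mul_factorial_mul_factorial (show n ≤ 2*n by omega)
  rw [show 2*n - n = n by omega] at h0
  have hcb : (Nat.centralBinom n : ℝ) * (Nat.factorial n : ℝ) * (Nat.factorial n : ℝ)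
      = (Nat.factorial (2*n) : ℝ) := by rw [Nat.centralBinom]; exact_mod_cast h0
  have he : (0:ℝ) < Real.exp 1 := Real.exp_pos 1
  have hsn : Real.sqrt n > 0 := Real.sqrt_pos.mpr hn0
  have hfn : (Nat.factorial n : ℝ) ≠ 0 := by positivity
  have hne : ((n:ℝ)/Real.exp 1) ^ n ≠ 0 := by positivity
  have hs2 : Real.sqrt 2 > 0 := by positivity
  have h4 : Real.sqrt (2*(2*(n:ℝ))) = 2 * Real.sqrt n := by
    rw [show 2*(2*(n:ℝ)) = 4 * n by ring, Real.sqrt_mul (by norm_num : (0:ℝ) ≤ 4),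
      show (4:ℝ) = 2^2 by norm_num, Real.sqrt_sq (by norm_num : (0:ℝ) ≤ 2)]
  have h2n : Real.sqrt (2*(n:ℝ)) = Real.sqrt 2 * Real.sqrt n :=
    Real.sqrt_mul (by norm_num) _
  have hpin : Real.sqrt (Real.pi * n) = Real.sqrt Real.pi * Real.sqrt n :=
    Real.sqrt_mul Real.pi_pos.le _
  have hbig : ((2*(n:ℝ))/Real.exp 1) ^ (2*n) = 4^n * ((n:ℝ)/Real.exp 1)^n * ((n:ℝ)/Real.exp 1)^n := by
    rw [show (2*(n:ℝ))/Real.exp 1 = 2 * ((n:ℝ)/Real.exp 1) by ring, mul_pow, two_mul, pow_add]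
    rw [show ((2:ℝ)^n*2^n) = 4^n by rw [← pow_add, ← two_mul, pow_mul]; norm_num, pow_add, ← mul_assoc]
  unfold cb Stirling.stirlingSeq
  push_cast
  rw [h4, h2n, hpin, hbig, ← hcb]
  have hsq2 : Real.sqrt 2 * Real.sqrt 2 = 2 := Real.mul_self_sqrt (by norm_num)
  field_simp
  ring_nf
  rw [Real.sq_sqrt (by norm_num : (0:ℝ) ≤ 2)]

lemma cb_tendsto : Tendsto cb atTop (nhds 1) := by
  have h2 : Tendsto (fun n : ℕ => 2 * n) atTop atTop :=
    tendsto_atTop_mono (fun n => by simp; omega) tendsto_id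
  have hS := Stirling.tendsto_stirlingSeq_sqrt_pi
  have hmain : Tendsto (fun n => Real.sqrt Real.pi * Stirling.stirlingSeq (2 * n) /
      Stirling.stirlingSeq n ^ 2) atTop (nhds 1) := by
    have hnum : Tendsto (fun n => Real.sqrt Real.pi * Stirling.stirlingSeq (2 * n)) atTop
        (nhds (Real.sqrt Real.pi * Real.sqrt Real.pi)) :=
      tendsto_const_nhds.mul (hS.comp h2)
    have hden : Tendsto (fun n => Stirling.stirlingSeq n ^ 2) atTop
        (nhds (Real.sqrt Real.pi ^ 2)) := hS.pow 2
    have hne : Real.sqrt Real.pi ^ 2 ≠ 0 := by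
      have := Real.sqrt_pos.mpr Real.pi_pos; positivity
    have := hnum.div hden hne
    have heq : Real.sqrt Real.pi * Real.sqrt Real.pi / Real.sqrt Real.pi ^ 2 = 1 := by
      rw [sq]; field_simp
    rwa [heq] at this
  refine hmain.congr' ?_
  filter_upwards [eventually_ge_atTop 1] with n hn
  exact (cb_eq_stirling n hn).symm

lemma phi_tendsto : Tendsto phi atTop (nhds 1) := by
  unfold phi
  have t1 : Tendsto (fun k : ℕ => ((k:ℝ)+1)/((k:ℝ)+2)) atTop (nhds 1) := by
    have := (tendsto_natCast_div_add_atTop (1:ℝ)).comp (tendsto_add_atTop_nat 1)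
    refine this.congr (fun k => ?_)
    simp only [Function.comp]; push_cast; ring_nf
  have t2 : Tendsto (fun k : ℕ => Real.sqrt ((k:ℝ)+1) / Real.sqrt k) atTop (nhds 1) := by
    have h0 : Tendsto (fun k : ℕ => ((k:ℝ)+1)/k) atTop (nhds 1) := by
      have := (tendsto_natCast_div_add_atTop (-1:ℝ)).comp (tendsto_add_atTop_nat 1)
      refine this.congr (fun k => ?_)
      simp only [Function.comp]; push_cast; ring_nf
    have := h0.sqrt
    rw [Real.sqrt_one] at this
    refine this.congr' ?_
    filter_upwards [eventually_ge_atTop 1] with k hk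
    exact Real.sqrt_div (by positivity) _
  have := t1.mul t2
  rw [mul_one] at this
  refine this.congr' ?_
  filter_upwards [eventually_ge_atTop 1] with k hk
  have hsk : Real.sqrt k ≠ 0 := by
    have : (0:ℝ) < k := by exact_mod_cast hk
    positivity
  have h2 : ((k:ℝ)+2) ≠ 0 := by positivity
  field_simp

lemma key_identity (a b : ℕ) :
    (((a:ℝ)+1) *
        (6 ^ ((a+1) + (b+1) + 1) *
            (Nat.doubleFactorial (2 * ((a+1) + (b+1) + 1) - 5) : ℝ) /
          (8 * Real.sqrt 3 * (Nat.factorial ((a+1) + (b+1) + 1) : ℝ))) /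
        ((1 / 2) * (3 : ℝ) ^ ((a+1) + (b+1)) / (((a:ℝ)+1) + ((b:ℝ)+1)) *
          (((a:ℝ)+1) * (Nat.choose (2 * (a+1)) (a+1) : ℝ)) *
          (((b:ℝ)+1) * (Nat.choose (2 * (b+1)) (b+1) : ℝ)))) /
      ((Real.sqrt (3 * Real.pi) / 4) * Real.sqrt (((a:ℝ)+1) / ((b:ℝ)+1)) *
        (((a:ℝ)+1) + ((b:ℝ)+1)) ^ (-(3 : ℝ) / 2))
    = cb (a+b+1) / (cb (a+1) * cb (b+1)) * phi (a+b+1) := by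
  have e1 : (a+1) + (b+1) + 1 = a+b+3 := by omega
  have e2 : 2 * (a+b+3) - 5 = 2*(a+b)+1 := by omega
  have e3 : (a+1) + (b+1) = a+b+2 := by omega
  rw [e1, e2, e3]
  -- double factorial identity
  have hf1 : ((Nat.factorial (a+b+1)):ℝ) ≠ 0 := by positivity
  have hnat : Nat.centralBinom (a+b+1) * Nat.factorial (a+b+1) * Nat.factorial (a+b+1)
      = 2^(a+b+1) * Nat.factorial (a+b+1) * Nat.doubleFactorial (2*(a+b)+1) := by
    have h1 := Nat.factorial_eq_mul_doubleFactorial (2*(a+b)+1)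
    have h2 : Nat.doubleFactorial (2*(a+b)+1+1) = 2^(a+b+1) * Nat.factorial (a+b+1) := by
      rw [show 2*(a+b)+1+1 = 2*(a+b+1) by omega]; exact Nat.doubleFactorial_two_mul _
    have h3 := Nat.choose_mul_factorial_mul_factorial (show a+b+1 ≤ 2*(a+b+1) by omega)
    rw [show 2*(a+b+1) - (a+b+1) = a+b+1 by omega] at h3
    rw [Nat.centralBinom, h3, show 2*(a+b+1) = 2*(a+b)+1+1 by omega, h1, h2]
  have hdf : ((Nat.doubleFactorial (2*(a+b)+1)):ℝ)
      = (Nat.centralBinom (a+b+1) : ℝ) * (Nat.factorial (a+b+1) : ℝ) / 2^(a+b+1) := by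
    have hcast := congrArg (Nat.cast : ℕ → ℝ) hnat
    push_cast at hcast
    rw [eq_div_iff (by positivity : ((2:ℝ)^(a+b+1)) ≠ 0)]
    refine mul_right_cancel₀ hf1 ?_
    linear_combination -hcast
  rw [hdf]
  -- factorial expansion
  have hfact3 : ((Nat.factorial (a+b+3)):ℝ)
      = ((a:ℝ)+(b:ℝ)+3) * ((a:ℝ)+(b:ℝ)+2) * (Nat.factorial (a+b+1)) := by
    rw [show a+b+3 = (a+b+2)+1 by omega, Nat.factorial_succ,
      show a+b+2 = (a+b+1)+1 by omega, Nat.factorial_succ]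
    push_cast; ring
  rw [hfact3]
  -- choose to centralBinom
  rw [show ((2*(a+1)).choose (a+1)) = Nat.centralBinom (a+1) from rfl,
    show ((2*(b+1)).choose (b+1)) = Nat.centralBinom (b+1) from rfl]
  -- rpow
  have hr : (((a:ℝ)+1) + ((b:ℝ)+1)) ^ (-(3:ℝ)/2)
      = (((a:ℝ)+(b:ℝ)+2) * Real.sqrt ((a:ℝ)+(b:ℝ)+2))⁻¹ := by
    have hx : (0:ℝ) < (a:ℝ)+(b:ℝ)+2 := by positivity
    rw [show ((a:ℝ)+1) + ((b:ℝ)+1) = (a:ℝ)+(b:ℝ)+2 by ring,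
      show (-(3:ℝ)/2) = -(1+1/2) by norm_num, Real.rpow_neg hx.le,
      Real.rpow_add hx, Real.rpow_one, ← Real.sqrt_eq_rpow]
  rw [hr]
  -- sqrt splittings
  rw [Real.sqrt_mul (by norm_num : (0:ℝ) ≤ 3) Real.pi,
    Real.sqrt_div (by positivity : (0:ℝ) ≤ (a:ℝ)+1)]
  unfold cb phi
  push_cast
  simp only [Real.sqrt_mul Real.pi_pos.le]
  -- power base splittings
  rw [show (6:ℝ)^(a+b+3) = 2^(a+b+3) * 3^(a+b+3) by
      rw [show (6:ℝ) = 2*3 by norm_num, mul_pow],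
    show (4:ℝ)^(a+b+1) = 2^(a+b+1) * 2^(a+b+1) by
      rw [show (4:ℝ) = 2*2 by norm_num, mul_pow],
    show (4:ℝ)^(a+1) = 2^(a+1) * 2^(a+1) by
      rw [show (4:ℝ) = 2*2 by norm_num, mul_pow],
    show (4:ℝ)^(b+1) = 2^(b+1) * 2^(b+1) by
      rw [show (4:ℝ) = 2*2 by norm_num, mul_pow]]
  have s3 : Real.sqrt 3 > 0 := by positivity
  have sπ : Real.sqrt Real.pi > 0 := Real.sqrt_pos.mpr Real.pi_pos
  have sa : Real.sqrt ((a:ℝ)+1) > 0 := by positivity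
  have sb : Real.sqrt ((b:ℝ)+1) > 0 := by positivity
  have sk : Real.sqrt ((a:ℝ)+(b:ℝ)+1) > 0 := by positivity
  have sn : Real.sqrt ((a:ℝ)+(b:ℝ)+2) > 0 := by positivity
  have hcb1 : ((Nat.centralBinom (a+b+1)):ℝ) > 0 := by
    exact_mod_cast Nat.centralBinom_pos _
  have hcb2 : ((Nat.centralBinom (a+1)):ℝ) > 0 := by exact_mod_cast Nat.centralBinom_pos _
  have hcb3 : ((Nat.centralBinom (b+1)):ℝ) > 0 := by exact_mod_cast Nat.centralBinom_pos _
  field_simp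
  ring_nf
  have q3 : Real.sqrt 3 ^ 2 = 3 := Real.sq_sqrt (by norm_num)
  have qπ : Real.sqrt Real.pi ^ 2 = Real.pi := Real.sq_sqrt Real.pi_pos.le
  have qa : Real.sqrt (1+(a:ℝ)) ^ 2 = 1+(a:ℝ) := Real.sq_sqrt (by positivity)
  have qb : Real.sqrt (1+(b:ℝ)) ^ 2 = 1+(b:ℝ) := Real.sq_sqrt (by positivity)
  have qk : Real.sqrt (1+(a:ℝ)+(b:ℝ)) ^ 2 = 1+(a:ℝ)+(b:ℝ) := Real.sq_sqrt (by positivity)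
  have qn : Real.sqrt (2+(a:ℝ)+(b:ℝ)) ^ 2 = 2+(a:ℝ)+(b:ℝ) := Real.sq_sqrt (by positivity)
  simp only [q3, qπ, qa, qb, qk, qn]
  ring

theorem statement19 :
    Filter.Tendsto
      (fun Lj : ℕ × ℕ =>
        ((Lj.1 : ℝ) *
            (6 ^ (Lj.1 + Lj.2 + 1) *
                (Nat.doubleFactorial (2 * (Lj.1 + Lj.2 + 1) - 5) : ℝ) /
              (8 * Real.sqrt 3 * (Nat.factorial (Lj.1 + Lj.2 + 1) : ℝ))) /
            ((1 / 2) * (3 : ℝ) ^ (Lj.1 + Lj.2) / ((Lj.1 : ℝ) + Lj.2) *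
              ((Lj.1 : ℝ) * (Nat.choose (2 * Lj.1) Lj.1 : ℝ)) *
              ((Lj.2 : ℝ) * (Nat.choose (2 * Lj.2) Lj.2 : ℝ)))) /
          ((Real.sqrt (3 * Real.pi) / 4) * Real.sqrt ((Lj.1 : ℝ) / (Lj.2 : ℝ)) *
            ((Lj.1 : ℝ) + (Lj.2 : ℝ)) ^ (-(3 : ℝ) / 2)))
      (Filter.atTop ×ˢ Filter.atTop) (nhds 1) := by
  have hk : Tendsto (fun p : ℕ × ℕ => p.1 + p.2 - 1) (atTop ×ˢ atTop) atTop := by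
    refine tendsto_atTop_mono' _ ?_ tendsto_fst
    filter_upwards [(eventually_ge_atTop 1).prod_inr atTop] with p hp
    omega
  have hG : Tendsto (fun p : ℕ × ℕ =>
      cb (p.1 + p.2 - 1) / (cb p.1 * cb p.2) * phi (p.1 + p.2 - 1))
      (atTop ×ˢ atTop) (nhds 1) := by
    have := ((cb_tendsto.comp hk).div
        ((cb_tendsto.comp tendsto_fst).mul (cb_tendsto.comp tendsto_snd))
        (by norm_num)).mul (phi_tendsto.comp hk)
    norm_num at this
    exact this
  refine hG.congr' ?_
  filter_upwards [(eventually_ge_atTop 1).prod_inl atTop,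
    (eventually_ge_atTop 1).prod_inr atTop] with p h1 h2
  obtain ⟨L, j⟩ := p
  simp only at h1 h2 ⊢
  obtain ⟨a, rfl⟩ : ∃ a, L = a + 1 := ⟨L - 1, by omega⟩
  obtain ⟨b, rfl⟩ : ∃ b, j = b + 1 := ⟨j - 1, by omega⟩
  have := key_identity a b
  push_cast
  push_cast at this
  rw [show a + 1 + (b + 1) - 1 = a + b + 1 by omega]
  exact this.symm
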